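/- Let V : ℕ → ℤ[T,T⁻¹] satisfy the Jones recurrence V(m+2) = (T³ − T)·V(m+1) + T⁴·V(m) for all m. Suppose V(0) ≠ 0 and the pair (V(0), V(1)) is semistable, i.e. deg V(1) ≤ deg V(0). Then: (i) for every m ≥ 1, the pair (V(m), V(m+1)) is stable; (ii) for every m ≥ 2, deg V(m) = deg V(0) + 3·m − 2; (iii) for every m ≥ 2, the leading coefficient of V(m) equals the leading coefficient of V(0). -/

import Mathlib

/-- The degree of a Laurent polynomial `f`, viewed as a finitely supported function
`ℤ → ℤ`: the maximum of its support in `WithBot ℤ` (so `jdeg 0 = ⊥`). -/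
noncomputable def jdeg (f : LaurentPolynomial ℤ) : WithBot ℤ :=
  (AddMonoidAlgebra.coeff f).support.max

/-- The leading coefficient of a Laurent polynomial: its coefficient at `jdeg f`
(for `f ≠ 0`; by convention `jcoeff 0 = 0`). -/
noncomputable def jcoeff (f : LaurentPolynomial ℤ) : ℤ :=
  (AddMonoidAlgebra.coeff f) (((AddMonoidAlgebra.coeff f).support.max).unbotD 0)

open LaurentPolynomial AddMonoidAlgebra

lemma jdeg_eq (f : LaurentPolynomial ℤ) :
    jdeg f = supDegree ((↑) : ℤ → WithBot ℤ) f := by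
  rw [jdeg, Finset.max_eq_sup_withBot]

lemma jdeg_eq_bot {f : LaurentPolynomial ℤ} : jdeg f = ⊥ ↔ f = 0 := by
  rw [jdeg]
  simp [Finset.max_eq_bot, Finsupp.support_eq_empty]

lemma jcoeff_eq (f : LaurentPolynomial ℤ) :
    jcoeff f = AddMonoidAlgebra.leadingCoeff ((↑) : ℤ → WithBot ℤ) f := by
  rcases eq_or_ne f 0 with rfl | hf
  · rw [leadingCoeff_zero, jcoeff]; simp
  · obtain ⟨a, _, he⟩ := exists_supDegree_mem_support ((↑) : ℤ → WithBot ℤ) hf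
    have h1 : (AddMonoidAlgebra.coeff f).support.max = ((a : WithBot ℤ)) := by
      rw [← jdeg, jdeg_eq, he]
    rw [jcoeff, AddMonoidAlgebra.leadingCoeff, he,
      Function.leftInverse_invFun WithBot.coe_injective a, h1, WithBot.unbotD_coe]

lemma T_mul_apply (n : ℤ) (f : LaurentPolynomial ℤ) (a : ℤ) :
    (T n * f).coeff a = f.coeff (-n + a) := by
  rw [show (T n * f : LaurentPolynomial ℤ).coeff a = (1:ℤ) * f.coeff (-n+a) from AddMonoidAlgebra.coeff_single_mul_apply f 1 n a,
    one_mul]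

lemma jdeg_T_mul (n : ℤ) (f : LaurentPolynomial ℤ) :
    jdeg (T n * f) = (n : WithBot ℤ) + jdeg f := by
  have hs : (T n * f).coeff.support = f.coeff.support.map (addLeftEmbedding n) := by
    ext a
    simp only [Finsupp.mem_support_iff, Finset.mem_map, addLeftEmbedding_apply]
    rw [T_mul_apply]
    constructor
    · intro h; exact ⟨-n + a, h, by ring⟩
    · rintro ⟨b, hb, rfl⟩; simpa using hb
  rw [jdeg, jdeg, hs, Finset.max_eq_sup_withBot, Finset.max_eq_sup_withBot, Finset.sup_map]
  rw [show ((↑) : ℤ → WithBot ℤ) ∘ (addLeftEmbedding n)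
      = (fun x => (n : WithBot ℤ) + x) ∘ ((↑) : ℤ → WithBot ℤ) by
    funext x; simp [addLeftEmbedding_apply]]
  exact (Finset.comp_sup_eq_sup_comp (fun x : WithBot ℤ => (n:WithBot ℤ) + x)
    (fun x y => Monotone.map_sup (fun a b h => add_le_add_right h _) x y) (by simp)).symm

lemma jcoeff_T_mul (n : ℤ) (f : LaurentPolynomial ℤ) :
    jcoeff (T n * f) = jcoeff f := by
  rcases eq_or_ne f 0 with rfl | hf
  · rw [mul_zero]
  · have hd : jdeg f ≠ ⊥ := fun h => hf (jdeg_eq_bot.mp h)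
    obtain ⟨d, hdd⟩ := WithBot.ne_bot_iff_exists.mp hd
    have h1 : jdeg (T n * f) = ((n + d : ℤ) : WithBot ℤ) := by
      rw [jdeg_T_mul, ← hdd]; rfl
    rw [jcoeff, jcoeff, show ((T n * f : LaurentPolynomial ℤ).coeff).support.max = jdeg (T n * f) from rfl,
      show f.coeff.support.max = jdeg f from rfl, h1, ← hdd,
      WithBot.unbotD_coe, WithBot.unbotD_coe, T_mul_apply]
    congr 1; ring

lemma jdeg_add_right {p q : LaurentPolynomial ℤ} (h : jdeg p < jdeg q) :
    jdeg (p + q) = jdeg q := by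
  rw [jdeg_eq, jdeg_eq]
  exact supDegree_add_eq_right (by rwa [jdeg_eq, jdeg_eq] at h)

lemma jcoeff_add_right {p q : LaurentPolynomial ℤ} (h : jdeg p < jdeg q) :
    jcoeff (p + q) = jcoeff q := by
  rw [jcoeff_eq, jcoeff_eq]
  exact leadingCoeff_add_eq_right (by rwa [jdeg_eq, jdeg_eq] at h)

lemma jdeg_sub_le (p q : LaurentPolynomial ℤ) :
    jdeg (p - q) ≤ jdeg p ⊔ jdeg q := by
  rw [jdeg_eq, jdeg_eq, jdeg_eq]
  exact supDegree_sub_le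

open LaurentPolynomial in
lemma jones_step (f g : LaurentPolynomial ℤ) (h : 1 + jdeg g < jdeg f) :
    jdeg ((T 3 - T 1) * f + T 4 * g) = ((3:ℤ) : WithBot ℤ) + jdeg f ∧
    jcoeff ((T 3 - T 1) * f + T 4 * g) = jcoeff f := by
  have hf : jdeg f ≠ ⊥ := (bot_le.trans_lt h).ne'
  have h' : ((1:ℤ) : WithBot ℤ) + jdeg g < jdeg f := by exact_mod_cast h
  have hid : (T 3 - T 1) * f + T 4 * g = (T 4 * g - T 1 * f) + T 3 * f := by ring
  have htail : jdeg (T 4 * g - T 1 * f) < jdeg (T 3 * f) := by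
    refine lt_of_le_of_lt (jdeg_sub_le _ _) ?_
    rw [jdeg_T_mul, jdeg_T_mul, jdeg_T_mul]
    refine sup_lt_iff.mpr ⟨?_, ?_⟩
    · have h4 : ((4:ℤ) : WithBot ℤ) + jdeg g = ((3:ℤ):WithBot ℤ) + (((1:ℤ):WithBot ℤ) + jdeg g) := by
        rw [← add_assoc, ← WithBot.coe_add]; norm_num
      rw [h4]
      exact WithBot.add_lt_add_left (by simp) h'
    · exact WithBot.add_lt_add_right hf (by exact_mod_cast (by norm_num : (1:ℤ) < 3))
  constructor
  · rw [hid, jdeg_add_right htail, jdeg_T_mul]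
  · rw [hid, jcoeff_add_right htail, jcoeff_T_mul]

open LaurentPolynomial in
/-- **Proposition 3.3** (semistable case). If `V` satisfies the Jones recurrence,
`V 0 ≠ 0`, and the pair `(V 0, V 1)` is semistable (`deg V 1 ≤ deg V 0`), then every
pair `(V m, V (m+1))` with `m ≥ 1` is stable, `deg V m = deg V 0 + 3m − 2` for
`m ≥ 2`, and the leading coefficient of `V m` equals that of `V 0` for `m ≥ 2`. -/
theorem jones_semistable_case (V : ℕ → LaurentPolynomial ℤ)
    (hV : ∀ m : ℕ, V (m + 2) = (T 3 - T 1) * V (m + 1) + T 4 * V m)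
    (h0 : V 0 ≠ 0)
    (hsemi : jdeg (V 1) ≤ jdeg (V 0)) :
    (∀ m : ℕ, 1 ≤ m → 1 + jdeg (V m) < jdeg (V (m + 1))) ∧
    (∀ m : ℕ, 2 ≤ m → jdeg (V m) = jdeg (V 0) + ((3 * (m : ℤ) - 2 : ℤ) : WithBot ℤ)) ∧
    (∀ m : ℕ, 2 ≤ m → jcoeff (V m) = jcoeff (V 0)) := by
  have hd0 : jdeg (V 0) ≠ ⊥ := fun h => h0 (jdeg_eq_bot.mp h)
  obtain ⟨e, he⟩ := WithBot.ne_bot_iff_exists.mp hd0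
  have key : ∀ m : ℕ, jdeg (V (m+2)) = ((e + 3*(m:ℤ) + 4 : ℤ) : WithBot ℤ) ∧
      jcoeff (V (m+2)) = jcoeff (V 0) ∧ 1 + jdeg (V (m+1)) < jdeg (V (m+2)) := by
    intro m
    induction m with
    | zero =>
      have htail : jdeg ((T 3 - T 1) * V 1) < jdeg (T 4 * V 0) := by
        have h1 : (T 3 - T 1) * V 1 = T 3 * V 1 - T 1 * V 1 := by ring
        rw [h1, jdeg_T_mul]
        refine lt_of_le_of_lt (jdeg_sub_le _ _) ?_
        rw [jdeg_T_mul, jdeg_T_mul]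
        have h3 : ((3:ℤ) : WithBot ℤ) + jdeg (V 1) ≤ ((3:ℤ):WithBot ℤ) + jdeg (V 0) :=
          add_le_add_right hsemi _
        have h4 : ((1:ℤ) : WithBot ℤ) + jdeg (V 1) ≤ ((3:ℤ):WithBot ℤ) + jdeg (V 1) :=
          add_le_add_left (by exact_mod_cast (by norm_num : (1:ℤ) ≤ 3)) _
        have h5 : ((3:ℤ) : WithBot ℤ) + jdeg (V 0) < ((4:ℤ):WithBot ℤ) + jdeg (V 0) :=
          WithBot.add_lt_add_right hd0 (by exact_mod_cast (by norm_num : (3:ℤ) < 4))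
        exact sup_lt_iff.mpr ⟨lt_of_le_of_lt h3 h5, lt_of_le_of_lt (h4.trans h3) h5⟩
      have hdeg : jdeg (V 2) = ((e + 4 : ℤ) : WithBot ℤ) := by
        rw [hV 0, jdeg_add_right htail, jdeg_T_mul, ← he, ← WithBot.coe_add]
        congr 1; ring
      refine ⟨by rw [hdeg]; congr 1; ring, ?_, ?_⟩
      · rw [hV 0, jcoeff_add_right htail, jcoeff_T_mul]
      · calc 1 + jdeg (V 1) ≤ 1 + jdeg (V 0) := add_le_add_right hsemi 1
          _ = ((1 + e : ℤ) : WithBot ℤ) := by rw [← he]; norm_cast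
          _ < ((e + 4 : ℤ) : WithBot ℤ) := by rw [WithBot.coe_lt_coe]; omega
          _ = jdeg (V 2) := hdeg.symm
    | succ k ih =>
      obtain ⟨ihd, ihc, ihs⟩ := ih
      have hstep := jones_step (V (k+2)) (V (k+1)) ihs
      have hrec : V (k+3) = (T 3 - T 1) * V (k+2) + T 4 * V (k+1) := hV (k+1)
      rw [← hrec] at hstep
      have hd3 : jdeg (V (k+3)) = ((e + 3*((k:ℤ)+1) + 4 : ℤ) : WithBot ℤ) := by
        rw [hstep.1, ihd, ← WithBot.coe_add]
        congr 1; ring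
      refine ⟨?_, ?_, ?_⟩
      · show jdeg (V (k+3)) = _
        rw [hd3]; congr 1
      · show jcoeff (V (k+3)) = _
        rw [hstep.2, ihc]
      · show 1 + jdeg (V (k+2)) < jdeg (V (k+3))
        rw [hd3, ihd]
        have : (1 : WithBot ℤ) + ((e + 3*(k:ℤ) + 4 : ℤ) : WithBot ℤ)
            = ((1 + (e + 3*(k:ℤ) + 4) : ℤ) : WithBot ℤ) := by norm_cast
        rw [this, WithBot.coe_lt_coe]
        omega
  refine ⟨?_, ?_, ?_⟩
  · intro m hm
    obtain ⟨k, rfl⟩ := Nat.exists_eq_add_of_le hm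
    rw [show 1 + k = k + 1 from by omega]
    exact (key k).2.2
  · intro m hm
    obtain ⟨k, rfl⟩ := Nat.exists_eq_add_of_le hm
    rw [show 2 + k = k + 2 from by omega]
    rw [(key k).1, ← he, ← WithBot.coe_add]
    congr 1; push_cast; ring
  · intro m hm
    obtain ⟨k, rfl⟩ := Nat.exists_eq_add_of_le hm
    rw [show 2 + k = k + 2 from by omega]
    exact (key k).2.1
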